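/- The probability-law map p_n : ▽_n → Δ_n admits a continuous section σ_n : Δ_n → ▽_n, given (identifying Ω with [0,1] with Lebesgue measure) by σ_n(α)(x) = a whenever x ∈ (Σ_{u<a} α(u), Σ_{u≤a} α(u)]. In particular p_n ∘ σ_n = id on Δ_n, and p_n is surjective. -/

import Mathlib

open MeasureTheory Set

namespace SecOfLaw

noncomputable def cum (n : ℕ) (α : Fin (n+1) → ℝ) (a : Fin (n+1)) : ℝ :=
  ∑ u ∈ Finset.univ.filter (fun u => u ≤ a), α u

noncomputable def low (n : ℕ) (α : Fin (n+1) → ℝ) (a : Fin (n+1)) : ℝ :=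
  ∑ u ∈ Finset.univ.filter (fun u => u < a), α u

noncomputable def sec (n : ℕ) (α : Fin (n+1) → ℝ) (x : ℝ) : Fin (n+1) :=
  if h : (Finset.univ.filter (fun a => x ≤ cum n α a)).Nonempty then
    (Finset.univ.filter (fun a => x ≤ cum n α a)).min' h
  else Fin.last n

variable {n : ℕ} {α : Fin (n+1) → ℝ}

lemma cum_eq_low_add (a : Fin (n+1)) : cum n α a = low n α a + α a := by
  have h : Finset.univ.filter (fun u => u ≤ a) =
      insert a (Finset.univ.filter (fun u => u < a)) := by
    ext u; simp [le_iff_lt_or_eq, or_comm, eq_comm]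
  rw [cum, h, Finset.sum_insert (by simp), low]; ring

lemma low_nonneg (hα : ∀ u, 0 ≤ α u) (a : Fin (n+1)) : 0 ≤ low n α a :=
  Finset.sum_nonneg fun u _ => hα u

lemma cum_le_of_lt (hα : ∀ u, 0 ≤ α u) {a b : Fin (n+1)} (h : a < b) :
    cum n α a ≤ low n α b := by
  apply Finset.sum_le_sum_of_subset_of_nonneg
  · intro u hu
    simp only [Finset.mem_filter, Finset.mem_univ, true_and] at hu ⊢
    exact lt_of_le_of_lt hu h
  · exact fun u _ _ => hα u

lemma sec_eq (hα : ∀ u, 0 ≤ α u) {a : Fin (n+1)} {x : ℝ}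
    (hx : x ∈ Set.Ioc (low n α a) (cum n α a)) : sec n α x = a := by
  set S := Finset.univ.filter (fun b => x ≤ cum n α b) with hS
  have haS : a ∈ S := by simp [hS, hx.2]
  have hne : S.Nonempty := ⟨a, haS⟩
  rw [sec, dif_pos hne]
  have h1 : S.min' hne ≤ a := Finset.min'_le _ _ haS
  rcases lt_or_eq_of_le h1 with h | h
  · exfalso
    have hmem := Finset.min'_mem S hne
    simp only [hS, Finset.mem_filter, Finset.mem_univ, true_and] at hmem
    have := (cum_le_of_lt hα h).trans_lt hx.1
    linarith
  · exact h

lemma sec_monotone (hα : ∀ u, 0 ≤ α u) : Monotone (sec n α) := by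
  intro x y hxy
  by_cases hy : (Finset.univ.filter (fun a => y ≤ cum n α a)).Nonempty
  · have hsub : (Finset.univ.filter (fun a => y ≤ cum n α a)) ⊆
        (Finset.univ.filter (fun a => x ≤ cum n α a)) := by
      intro a ha
      simp only [Finset.mem_filter, Finset.mem_univ, true_and] at ha ⊢
      linarith
    have hx : (Finset.univ.filter (fun a => x ≤ cum n α a)).Nonempty :=
      hy.mono hsub
    rw [sec, dif_pos hx, sec, dif_pos hy]
    exact Finset.min'_le _ _ (hsub (Finset.min'_mem _ hy))
  · simp only [sec]
    rw [dif_neg hy]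
    exact Fin.le_last _
lemma sec_measurable (hα : ∀ u, 0 ≤ α u) : Measurable (sec n α) := by
  apply measurable_to_countable'
  intro i
  have : OrdConnected (sec n α ⁻¹' {i}) := by
    constructor
    intro x hx y hy z hz
    simp only [mem_preimage, mem_singleton_iff] at *
    have h1 : sec n α z ≤ i := by rw [← hy]; exact sec_monotone hα hz.2
    have h2 : i ≤ sec n α z := by rw [← hx]; exact sec_monotone hα hz.1
    exact le_antisymm h1 h2
  exact this.measurableSet

end SecOfLaw

namespace SecOfLaw2
open SecOfLaw

variable {n : ℕ} {α β : Fin (n+1) → ℝ}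

lemma cum_last (hs : ∑ u, α u = 1) : cum n α (Fin.last n) = 1 := by
  rw [cum, ← hs]
  apply Finset.sum_congr _ (fun _ _ => rfl)
  ext u; simp [Fin.le_last]

lemma cum_mono (hα : ∀ u, 0 ≤ α u) {a b : Fin (n+1)} (h : a ≤ b) :
    cum n α a ≤ cum n α b := by
  apply Finset.sum_le_sum_of_subset_of_nonneg
  · intro u hu
    simp only [Finset.mem_filter, Finset.mem_univ, true_and] at hu ⊢
    exact hu.trans h
  · exact fun u _ _ => hα u

lemma mem_Icc_of_sec_eq (hα : ∀ u, 0 ≤ α u) (hs : ∑ u, α u = 1)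
    {i : Fin (n+1)} {x : ℝ} (hx : x ∈ Set.Icc (0:ℝ) 1) (h : sec n α x = i) :
    x ∈ Set.Icc (low n α i) (cum n α i) := by
  have hlast : (Fin.last n) ∈ Finset.univ.filter (fun a => x ≤ cum n α a) := by
    simp [cum_last hs, hx.2]
  have hne : (Finset.univ.filter (fun a => x ≤ cum n α a)).Nonempty := ⟨_, hlast⟩
  rw [sec, dif_pos hne] at h
  have hmem := Finset.min'_mem _ hne
  rw [h] at hmem
  simp only [Finset.mem_filter, Finset.mem_univ, true_and] at hmem
  refine ⟨?_, hmem⟩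
  by_cases hi : i = 0
  · subst hi
    have : low n α 0 = 0 := by
      rw [low]
      apply Finset.sum_eq_zero
      intro u hu
      simp only [Finset.mem_filter, Finset.mem_univ, true_and] at hu
      exact absurd hu (Fin.not_lt_zero u)
    rw [this]; exact hx.1
  · have hpos : 0 < i.val := Nat.pos_of_ne_zero (fun hh => hi (Fin.ext hh))
    set j : Fin (n+1) := ⟨i.val - 1, by omega⟩ with hj
    have hji : j < i := by rw [Fin.lt_def]; show i.val - 1 < i.val; omega
    have hlowj : low n α i = cum n α j := by
      rw [low, cum]
      apply Finset.sum_congr _ (fun _ _ => rfl)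
      ext u
      simp only [Finset.mem_filter, Finset.mem_univ, true_and, Fin.lt_def, Fin.le_def, hj]
      omega
    have hjnot : j ∉ Finset.univ.filter (fun a => x ≤ cum n α a) := by
      intro hmem'
      have := Finset.min'_le _ _ hmem'
      rw [h] at this
      exact absurd this (not_le.mpr hji)
    simp only [Finset.mem_filter, Finset.mem_univ, true_and, not_le] at hjnot
    rw [hlowj]
    exact hjnot.le

lemma law (hα : ∀ u, 0 ≤ α u) (hs : ∑ u, α u = 1) (i : Fin (n+1)) :
    (volume.restrict (Set.Icc (0:ℝ) 1)) (sec n α ⁻¹' {i}) = ENNReal.ofReal (α i) := by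
  rw [Measure.restrict_apply' measurableSet_Icc]
  have hαi : cum n α i - low n α i = α i := by rw [cum_eq_low_add]; ring
  apply le_antisymm
  · calc volume (sec n α ⁻¹' {i} ∩ Set.Icc 0 1)
        ≤ volume (Set.Icc (low n α i) (cum n α i)) := by
          apply measure_mono
          rintro x ⟨hx1, hx2⟩
          exact mem_Icc_of_sec_eq hα hs hx2 hx1
      _ = ENNReal.ofReal (α i) := by rw [Real.volume_Icc, hαi]
  · calc ENNReal.ofReal (α i)
        = volume (Set.Ioc (low n α i) (cum n α i)) := by rw [Real.volume_Ioc, hαi]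
      _ ≤ volume (sec n α ⁻¹' {i} ∩ Set.Icc 0 1) := by
          apply measure_mono
          intro x hx
          refine ⟨sec_eq hα hx, ?_, ?_⟩
          · exact le_trans (low_nonneg hα i) hx.1.le
          · exact hx.2.trans ((cum_mono hα (Fin.le_last i)).trans (cum_last hs).le)

lemma sec_eq_of_close {δ' : ℝ} (h : ∀ a, |cum n α a - cum n β a| ≤ δ')
    {x : ℝ} (hx : ∀ a, δ' < |x - cum n α a|) : sec n α x = sec n β x := by
  have key : ∀ a : Fin (n+1), (x ≤ cum n α a ↔ x ≤ cum n β a) := by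
    intro a
    have h1 := abs_le.mp (h a)
    have h2 := hx a
    rcases le_or_gt x (cum n α a) with hc | hc
    · have : |x - cum n α a| = cum n α a - x := by
        rw [abs_sub_comm, abs_of_nonneg (by linarith)]
      rw [this] at h2
      exact ⟨fun _ => by linarith, fun _ => hc⟩
    · have : |x - cum n α a| = x - cum n α a := abs_of_nonneg (by linarith)
      rw [this] at h2
      exact ⟨fun hh => absurd hh (not_le.mpr hc), fun hh => by linarith⟩
  have hSet : (Finset.univ.filter (fun a => x ≤ cum n α a)) =
      (Finset.univ.filter (fun a => x ≤ cum n β a)) := by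
    apply Finset.filter_congr
    intro a _
    exact key a
  simp only [sec, hSet]

end SecOfLaw2


open SecOfLaw SecOfLaw2

/-- the probability-law map `p_n : ▽_n → Δ_n` admits a continuous section
`σ_n`, with `σ_n(α)(x) = a` for `x ∈ (Σ_{u<a} α(u), Σ_{u≤a} α(u)]` (here `Ω = [0,1]` with
Lebesgue measure).  In particular `p_n ∘ σ_n = id` and `p_n` is surjective. -/
theorem section_of_law (n : ℕ) :
    ∃ s : stdSimplex ℝ (Fin (n + 1)) → ℝ → Fin (n + 1),
      -- measurability of each σ_n(α)
      (∀ α, Measurable (s α)) ∧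
      -- the defining formula
      (∀ (α : stdSimplex ℝ (Fin (n + 1))) (a : Fin (n + 1)) (x : ℝ),
        x ∈ Set.Ioc (∑ u ∈ Finset.univ.filter (fun u => u < a), (α : Fin (n + 1) → ℝ) u)
              (∑ u ∈ Finset.univ.filter (fun u => u ≤ a), (α : Fin (n + 1) → ℝ) u) →
        s α x = a) ∧
      -- p_n ∘ σ_n = id : the law of σ_n(α) is α
      (∀ (α : stdSimplex ℝ (Fin (n + 1))) (i : Fin (n + 1)),
        (volume.restrict (Set.Icc (0:ℝ) 1)) (s α ⁻¹' {i})
          = ENNReal.ofReal ((α : Fin (n + 1) → ℝ) i)) ∧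
      -- continuity of σ_n for the L¹ (probability convergence) metric on ▽_n
      (∀ (α : stdSimplex ℝ (Fin (n + 1))) (ε : ℝ), 0 < ε → ∃ δ : ℝ, 0 < δ ∧
        ∀ β : stdSimplex ℝ (Fin (n + 1)), dist α β < δ →
          (volume.restrict (Set.Icc (0:ℝ) 1)) {x | s α x ≠ s β x} < ENNReal.ofReal ε) := by
  refine ⟨fun α => sec n (α : Fin (n+1) → ℝ), ?_, ?_, ?_, ?_⟩
  · intro α
    exact sec_measurable α.2.1
  · intro α a x hx
    exact sec_eq α.2.1 hx
  · intro α i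
    exact law α.2.1 α.2.2 i
  · intro α ε hε
    set N : ℝ := (n : ℝ) + 1 with hN
    have hN1 : (1:ℝ) ≤ N := le_add_of_nonneg_left (Nat.cast_nonneg n)
    refine ⟨ε / (2 * N ^ 2 + 1), by positivity, ?_⟩
    intro β hβ
    set δ : ℝ := ε / (2 * N ^ 2 + 1) with hδdef
    have hδpos : 0 < δ := by positivity
    set δ' : ℝ := N * δ with hδ'
    have hδ'pos : 0 < δ' := by positivity
    -- cumulative sums are close
    have hclose : ∀ a, |cum n (α : Fin (n+1) → ℝ) a - cum n (β : Fin (n+1) → ℝ) a| ≤ δ' := by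
      intro a
      rw [cum, cum, ← Finset.sum_sub_distrib]
      calc |∑ u ∈ Finset.univ.filter (fun u => u ≤ a),
              ((α : Fin (n+1) → ℝ) u - (β : Fin (n+1) → ℝ) u)|
          ≤ ∑ u ∈ Finset.univ.filter (fun u => u ≤ a),
              |(α : Fin (n+1) → ℝ) u - (β : Fin (n+1) → ℝ) u| := Finset.abs_sum_le_sum_abs _ _
        _ ≤ ∑ _u ∈ Finset.univ.filter (fun u => u ≤ a), δ := by
            apply Finset.sum_le_sum
            intro u _
            have h1 : dist ((α : Fin (n+1) → ℝ) u) ((β : Fin (n+1) → ℝ) u)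
                ≤ dist (α : Fin (n+1) → ℝ) (β : Fin (n+1) → ℝ) := dist_le_pi_dist _ _ u
            rw [Real.dist_eq] at h1
            have h2 : dist (α : Fin (n+1) → ℝ) (β : Fin (n+1) → ℝ) = dist α β :=
              (Subtype.dist_eq α β).symm
            rw [h2] at h1
            linarith
        _ ≤ ∑ _u : Fin (n+1), δ := by
            apply Finset.sum_le_sum_of_subset_of_nonneg (Finset.filter_subset _ _)
            intro u _ _; exact hδpos.le
        _ = N * δ := by simp [Finset.sum_const, hN]
    -- the bad set is covered by small intervals
    have hcover : {x | sec n (α : Fin (n+1) → ℝ) x ≠ sec n (β : Fin (n+1) → ℝ) x}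
        ⊆ ⋃ a : Fin (n+1), Set.Icc (cum n (α : Fin (n+1) → ℝ) a - δ')
            (cum n (α : Fin (n+1) → ℝ) a + δ') := by
      intro x hx
      by_contra hc
      simp only [Set.mem_iUnion, Set.mem_Icc, not_exists, not_and_or, not_le] at hc
      apply hx
      apply sec_eq_of_close hclose
      intro a
      rcases hc a with h | h
      · rw [abs_of_nonpos (by linarith)]; linarith
      · rw [abs_of_nonneg (by linarith)]; linarith
    rw [Measure.restrict_apply' measurableSet_Icc]
    calc volume ({x | sec n (α : Fin (n+1) → ℝ) x ≠ sec n (β : Fin (n+1) → ℝ) x} ∩ Set.Icc 0 1)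
        ≤ volume (⋃ a : Fin (n+1), Set.Icc (cum n (α : Fin (n+1) → ℝ) a - δ')
            (cum n (α : Fin (n+1) → ℝ) a + δ')) :=
          measure_mono (le_trans Set.inter_subset_left hcover)
      _ ≤ ∑' a : Fin (n+1), volume (Set.Icc (cum n (α : Fin (n+1) → ℝ) a - δ')
            (cum n (α : Fin (n+1) → ℝ) a + δ')) := measure_iUnion_le _
      _ = ∑ a : Fin (n+1), ENNReal.ofReal (2 * δ') := by
          rw [tsum_fintype]
          apply Finset.sum_congr rfl
          intro a _
          rw [Real.volume_Icc]
          congr 1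
          ring
      _ = ENNReal.ofReal (N * (2 * δ')) := by
          rw [Finset.sum_const, Finset.card_univ, Fintype.card_fin, nsmul_eq_mul]
          rw [← ENNReal.ofReal_natCast, ← ENNReal.ofReal_mul (by positivity)]
          congr 1
          push_cast [hN]
          ring
      _ < ENNReal.ofReal ε := by
          apply (ENNReal.ofReal_lt_ofReal_iff hε).mpr
          rw [hδ', hδdef]
          have h2N : (0:ℝ) < 2 * N ^ 2 + 1 := by positivity
          have heq : N * (2 * (N * (ε / (2 * N ^ 2 + 1)))) = (2 * N ^ 2) * ε / (2 * N ^ 2 + 1) := by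
            ring
          rw [heq, div_lt_iff₀ h2N]
          nlinarith
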